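/- arXiv:1510.06523 — 5 statements merged into one kernel-verified Lean document; each statement's English description precedes it below -/
import Mathlib

section
/- For every real eccentricity e with 0 < e < 1, ∫₀^{2π} sin²E/(1 − e·cos E)² dE = (2π/e²)·(1/√(1 − e²) − 1). -/
open Real

theorem nu_deriv (e s b x : ℝ) (he0 : 0 < e) (he1 : e < 1) (hs0 : 0 < s)
    (hs : s^2 = 1 - e^2) (hb : b = e / (1 + s)) :
    HasDerivAt (fun y => y + 2 * Real.arctan (b * Real.sin y / (1 - b * Real.cos y)))
      (s / (1 - e * Real.cos x)) x := by
  have hs1 : (0:ℝ) < 1 + s := by linarith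
  have hbe : b * (1 + s) = e := by rw [hb]; field_simp
  have hb0 : 0 < b := by rw [hb]; positivity
  have hb1 : b < 1 := by rw [hb, div_lt_one hs1]; nlinarith
  have hb2 : s * (1 + b^2) = 1 - b^2 := by
    rw [hb]; field_simp; linear_combination (s+1) * hs
  have hbc : 0 < 1 - b * Real.cos x := by
    nlinarith [Real.cos_le_one x, Real.neg_one_le_cos x]
  have hec : 0 < 1 - e * Real.cos x := by
    nlinarith [Real.cos_le_one x, Real.neg_one_le_cos x]
  have hpy : Real.sin x ^ 2 = 1 - Real.cos x ^ 2 := by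
    nlinarith [Real.sin_sq_add_cos_sq x]
  have hA : 1 + b^2 - 2*b*Real.cos x = 2*(1 - e*Real.cos x)/(1+s) := by
    rw [hb]; field_simp; linear_combination hs
  have hA0 : 0 < 1 + b^2 - 2*b*Real.cos x := by rw [hA]; positivity
  have hg : HasDerivAt (fun y => b * Real.sin y / (1 - b * Real.cos y))
      ((b * Real.cos x * (1 - b * Real.cos x) - b * Real.sin x * (b * Real.sin x)) /
        (1 - b * Real.cos x)^2) x := by
    have := (((Real.hasDerivAt_sin x).const_mul b).div
      (((Real.hasDerivAt_cos x).const_mul b).const_sub 1) hbc.ne')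
    exact this.congr_deriv (by ring)
  have harc := (Real.hasDerivAt_arctan (b * Real.sin x / (1 - b * Real.cos x))).comp x hg
  have h := (hasDerivAt_id x).add (harc.const_mul 2)
  refine h.congr_deriv ?_
  symm
  have h1g : 1 + (b * Real.sin x / (1 - b * Real.cos x))^2
      = (1 + b^2 - 2 * b * Real.cos x) / (1 - b * Real.cos x)^2 := by
    field_simp
    linear_combination (b^2) * hpy
  rw [h1g]
  have key : 1 / ((1 + b^2 - 2*b*Real.cos x)/(1 - b*Real.cos x)^2) *
      ((b * Real.cos x * (1 - b * Real.cos x) - b * Real.sin x * (b * Real.sin x)) /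
        (1 - b * Real.cos x)^2) = b * (Real.cos x - b) / (1 + b^2 - 2*b*Real.cos x) := by
    rw [one_div_div]
    field_simp [hA0.ne']
    congr 1
    linear_combination (-b) * hpy
  rw [key, hA]
  field_simp
  linear_combination hb2 - Real.cos x * hbe

theorem F_deriv (e s b x : ℝ) (he0 : 0 < e) (he1 : e < 1) (hs0 : 0 < s)
    (hs : s^2 = 1 - e^2) (hb : b = e / (1 + s)) :
    HasDerivAt (fun y => -(Real.sin y / (e * (1 - e * Real.cos y)))
        + (y + 2 * Real.arctan (b * Real.sin y / (1 - b * Real.cos y))) / (e^2 * s)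
        - y / e^2)
      (Real.sin x ^ 2 / (1 - e * Real.cos x) ^ 2) x := by
  have hec : 0 < 1 - e * Real.cos x := by
    nlinarith [Real.cos_le_one x, Real.neg_one_le_cos x]
  have hpy : Real.sin x ^ 2 = 1 - Real.cos x ^ 2 := by
    nlinarith [Real.sin_sq_add_cos_sq x]
  have hd : e * (1 - e * Real.cos x) ≠ 0 := by positivity
  have hT1 : HasDerivAt (fun y => Real.sin y / (e * (1 - e * Real.cos y)))
      ((Real.cos x * (e * (1 - e * Real.cos x)) - Real.sin x * (e * (e * Real.sin x))) /
        (e * (1 - e * Real.cos x))^2) x := by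
    have hden : HasDerivAt (fun y => e * (1 - e * Real.cos y)) (e * (e * Real.sin x)) x := by
      have := (((Real.hasDerivAt_cos x).const_mul e).const_sub 1).const_mul e
      exact this.congr_deriv (by ring)
    exact (Real.hasDerivAt_sin x).div hden hd
  have hT2 := (nu_deriv e s b x he0 he1 hs0 hs hb).div_const (e^2 * s)
  have hT3 := (hasDerivAt_id x).div_const (e^2)
  have h := (hT1.neg.add hT2).sub hT3
  refine h.congr_deriv ?_
  symm
  field_simp
  ring

/-- For every real eccentricity `e` with `0 < e < 1`,
`∫₀^{2π} sin²E/(1 − e·cos E)² dE = (2π/e²)·(1/√(1 − e²) − 1)`. -/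
theorem kepler_average_sin_sq_over_radial_factor_sq (e : ℝ) (he0 : 0 < e) (he1 : e < 1) :
    ∫ E in (0:ℝ)..(2 * π), Real.sin E ^ 2 / (1 - e * Real.cos E) ^ 2 =
      (2 * π / e ^ 2) * (1 / Real.sqrt (1 - e ^ 2) - 1) := by
  set s := Real.sqrt (1 - e ^ 2) with hsdef
  have h1e : (0:ℝ) < 1 - e^2 := by nlinarith
  have hs0 : 0 < s := Real.sqrt_pos.mpr h1e
  have hs : s^2 = 1 - e^2 := Real.sq_sqrt h1e.le
  set b := e / (1 + s) with hbdef
  have hF : ∀ x ∈ Set.uIcc (0:ℝ) (2*π),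
      HasDerivAt (fun y => -(Real.sin y / (e * (1 - e * Real.cos y)))
        + (y + 2 * Real.arctan (b * Real.sin y / (1 - b * Real.cos y))) / (e^2 * s)
        - y / e^2)
      (Real.sin x ^ 2 / (1 - e * Real.cos x) ^ 2) x :=
    fun x _ => F_deriv e s b x he0 he1 hs0 hs hbdef
  have hcont : Continuous fun x : ℝ => Real.sin x ^ 2 / (1 - e * Real.cos x) ^ 2 := by
    apply Continuous.div (by continuity) (by continuity)
    intro x
    have : 0 < 1 - e * Real.cos x := by
      nlinarith [Real.cos_le_one x, Real.neg_one_le_cos x]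
    positivity
  rw [intervalIntegral.integral_eq_sub_of_hasDerivAt hF (hcont.intervalIntegrable 0 (2 * π))]
  simp [Real.sin_two_pi, Real.cos_two_pi, Real.arctan_zero]
  field_simp
end

section
/- Let a > 0, β > 0 and 0 ≤ e < 1. The average over the mean anomaly of the fourth power of the orbital speed, v⁴ = β²(2/r − 1/a)², along a Kepler ellipse of semi-major axis a and eccentricity e equals (β²/a²)(4/√(1 − e²) − 3); explicitly, (1/(2π)) ∫₀^{2π} β²(2/(a(1 − e·cos E)) − 1/a)²(1 − e·cos E) dE = (β²/a²)(4/√(1 − e²) − 3). -/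
open Real

lemma kepler_aux_integral_inv (e : ℝ) (he0 : 0 ≤ e) (he1 : e < 1) :
    ∫ x in (0:ℝ)..(2 * π), (1 - e * Real.cos x)⁻¹ =
      2 * π / Real.sqrt (1 - e ^ 2) := by
  set b := Real.sqrt (1 - e ^ 2) with hbdef
  have hb2 : b ^ 2 = 1 - e ^ 2 := Real.sq_sqrt (by nlinarith)
  have hb0 : 0 < b := Real.sqrt_pos.mpr (by nlinarith)
  have hu : ∀ x : ℝ, 0 < 1 - e * Real.cos x := fun x => by
    nlinarith [Real.cos_le_one x, Real.neg_one_le_cos x]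
  set F : ℝ → ℝ := fun x =>
    (1 / b) * (x + 2 * Real.arctan (e * Real.sin x / (1 + b - e * Real.cos x))) with hFdef
  have hF : ∀ x : ℝ, HasDerivAt F (1 - e * Real.cos x)⁻¹ x := by
    intro x
    have hD : (0:ℝ) < 1 + b - e * Real.cos x := by
      nlinarith [Real.cos_le_one x, Real.neg_one_le_cos x]
    have hN : HasDerivAt (fun y => e * Real.sin y) (e * Real.cos x) x :=
      (Real.hasDerivAt_sin x).const_mul e
    have hDd : HasDerivAt (fun y => 1 + b - e * Real.cos y) (e * Real.sin x) x := by
      have h := ((Real.hasDerivAt_cos x).const_mul e).const_sub (1 + b)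
      simpa using h
    have hq := (hN.div hDd hD.ne').arctan
    have h1 := ((hasDerivAt_id x).add (hq.const_mul 2)).const_mul (1 / b)
    refine h1.congr_deriv ?_
    simp only [Pi.div_apply]
    have hsc : Real.sin x ^ 2 + Real.cos x ^ 2 = 1 := Real.sin_sq_add_cos_sq x
    have hDN : (1 + b - e * Real.cos x) ^ 2 + (e * Real.sin x) ^ 2 =
        2 * (1 + b) * (1 - e * Real.cos x) := by nlinarith
    have hux := hu x
    have h1b : (0:ℝ) < 1 + b := by linarith
    have key : 1 / (1 + (e * Real.sin x / (1 + b - e * Real.cos x)) ^ 2) *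
        ((e * Real.cos x * (1 + b - e * Real.cos x) - e * Real.sin x * (e * Real.sin x)) /
          (1 + b - e * Real.cos x) ^ 2) =
        (e * Real.cos x - (1 - b)) / (2 * (1 - e * Real.cos x)) := by
      have hA : 1 + (e * Real.sin x / (1 + b - e * Real.cos x)) ^ 2 =
          2 * (1 + b) * (1 - e * Real.cos x) / (1 + b - e * Real.cos x) ^ 2 := by
        rw [← hDN]; field_simp
      rw [hA]
      field_simp
      linear_combination (-(e ^ 2)) * hsc - hb2
    rw [key]
    field_simp
    ring
  have hcont : Continuous fun x : ℝ => (1 - e * Real.cos x)⁻¹ :=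
    (continuous_const.sub (continuous_const.mul Real.continuous_cos)).inv₀
      fun x => (hu x).ne'
  rw [intervalIntegral.integral_eq_sub_of_hasDerivAt (fun x _ => hF x)
      (hcont.intervalIntegrable _ _)]
  simp only [hFdef, Real.sin_two_pi, Real.cos_two_pi, Real.sin_zero, Real.cos_zero,
    zero_mul, mul_zero, zero_div, Real.arctan_zero, add_zero, zero_add]
  field_simp
  ring

/-- Let `a > 0`, `β > 0` and `0 ≤ e < 1`. The average over the mean anomaly of the fourth power
of the orbital speed, `v⁴ = β²(2/r − 1/a)²`, along a Kepler ellipse of semi-major axis `a` and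
eccentricity `e` equals `(β²/a²)(4/√(1 − e²) − 3)`:
`(1/(2π)) ∫₀^{2π} β²(2/(a(1 − e·cos E)) − 1/a)²(1 − e·cos E) dE = (β²/a²)(4/√(1 − e²) − 3)`. -/
theorem kepler_mean_anomaly_average_v_fourth (a β e : ℝ) (ha : 0 < a) (hβ : 0 < β)
    (he0 : 0 ≤ e) (he1 : e < 1) :
    (1 / (2 * π)) * ∫ E in (0:ℝ)..(2 * π),
        β ^ 2 * (2 / (a * (1 - e * Real.cos E)) - 1 / a) ^ 2 * (1 - e * Real.cos E) =
      (β ^ 2 / a ^ 2) * (4 / Real.sqrt (1 - e ^ 2) - 3) := by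
  have hu : ∀ x : ℝ, 0 < 1 - e * Real.cos x := fun x => by
    nlinarith [Real.cos_le_one x, Real.neg_one_le_cos x]
  set c : ℝ := β ^ 2 / a ^ 2 with hc
  have hcongr : ∀ E : ℝ,
      β ^ 2 * (2 / (a * (1 - e * Real.cos E)) - 1 / a) ^ 2 * (1 - e * Real.cos E) =
        4 * c * (1 - e * Real.cos E)⁻¹ + (-(3 * c) + (-(c * e)) * Real.cos E) := by
    intro E
    have hux := (hu E).ne'
    rw [hc]
    field_simp
    ring
  rw [intervalIntegral.integral_congr (fun E _ => hcongr E)]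
  have hcont : Continuous fun x : ℝ => (1 - e * Real.cos x)⁻¹ :=
    (continuous_const.sub (continuous_const.mul Real.continuous_cos)).inv₀
      fun x => (hu x).ne'
  rw [intervalIntegral.integral_add (f := fun x => 4 * c * (1 - e * Real.cos x)⁻¹)
      (g := fun x => -(3 * c) + (-(c * e)) * Real.cos x)
      ((continuous_const.mul hcont).intervalIntegrable _ _)
      ((continuous_const.add (continuous_const.mul Real.continuous_cos)).intervalIntegrable _ _),
    intervalIntegral.integral_const_mul, kepler_aux_integral_inv e he0 he1,
    intervalIntegral.integral_add (f := fun _ => -(3 * c)) (g := fun x => (-(c * e)) * Real.cos x)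
      (intervalIntegrable_const)
      ((continuous_const.mul Real.continuous_cos).intervalIntegrable _ _),
    intervalIntegral.integral_const_mul, integral_cos]
  have hb0 : 0 < Real.sqrt (1 - e ^ 2) := Real.sqrt_pos.mpr (by nlinarith)
  have hπ : (0:ℝ) < π := Real.pi_pos
  simp [Real.sin_two_pi]
  field_simp [ha.ne']
  have ha2 : a ^ 2 * a⁻¹ ^ 2 = 1 := by field_simp
  linear_combination
end

section
/- Let a > 0, β > 0 and 0 ≤ e < 1. The average over the mean anomaly of v²/r = β(2/r − 1/a)/r along a Kepler ellipse of semi-major axis a and eccentricity e equals (β/a²)(2/√(1 − e²) − 1); explicitly, (1/(2π)) ∫₀^{2π} β(2/(a(1 − e·cos E)) − 1/a)·(1/(a(1 − e·cos E)))·(1 − e·cos E) dE = (β/a²)(2/√(1 − e²) − 1). -/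
open Real

lemma kepler_core_integral (e : ℝ) (he0 : 0 ≤ e) (he1 : e < 1) :
    ∫ E in (0:ℝ)..(2 * π), 1 / (1 - e * Real.cos E) = 2 * π / Real.sqrt (1 - e ^ 2) := by
  set s := Real.sqrt (1 - e ^ 2) with hs
  have he2 : (0:ℝ) < 1 - e ^ 2 := by nlinarith
  have hs0 : 0 < s := Real.sqrt_pos.mpr he2
  have hs2 : s ^ 2 = 1 - e ^ 2 := Real.sq_sqrt he2.le
  have hden : ∀ x : ℝ, 0 < 1 - e * Real.cos x := by
    intro x
    nlinarith [Real.cos_le_one x, Real.neg_one_le_cos x, abs_nonneg e]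
  have hD : ∀ x : ℝ, 0 < 1 + s - e * Real.cos x := by
    intro x; have := hden x; linarith
  set F : ℝ → ℝ := fun x => (x + 2 * Real.arctan (e * Real.sin x / (1 + s - e * Real.cos x))) / s
    with hF
  have hderiv : ∀ x : ℝ, HasDerivAt F (1 / (1 - e * Real.cos x)) x := by
    intro x
    have hDx := (hD x).ne'
    have hu : HasDerivAt (fun x => e * Real.sin x / (1 + s - e * Real.cos x))
        ((e * Real.cos x * (1 + s - e * Real.cos x) - e * Real.sin x * (e * Real.sin x)) /
          (1 + s - e * Real.cos x) ^ 2) x := by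
      have h1 : HasDerivAt (fun x => e * Real.sin x) (e * Real.cos x) x :=
        (Real.hasDerivAt_sin x).const_mul e
      have h2 : HasDerivAt (fun x => 1 + s - e * Real.cos x) (e * Real.sin x) x := by
        have := ((Real.hasDerivAt_cos x).const_mul e).const_sub (1 + s)
        simpa using this
      exact h1.div h2 hDx
    have ha := hu.arctan
    have hfull := ((hasDerivAt_id x).add (ha.const_mul 2)).div_const s
    refine hfull.congr_deriv ?_
    symm
    have hsin : Real.sin x ^ 2 = 1 - Real.cos x ^ 2 := by
      have := Real.sin_sq_add_cos_sq x; nlinarith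
    set c := Real.cos x
    have hkey : (1 + s - e * c) ^ 2 + (e * Real.sin x) ^ 2 = 2 * (1 + s) * (1 - e * c) := by
      have : Real.sin x ^ 2 = 1 - c ^ 2 := hsin
      nlinarith [this]
    have h1u : 1 + (e * Real.sin x / (1 + s - e * c)) ^ 2
        = 2 * (1 + s) * (1 - e * c) / (1 + s - e * c) ^ 2 := by
      rw [eq_div_iff (by positivity)]
      field_simp
      linear_combination hkey
    rw [h1u]
    have h1 : (1 + s - e * c) ≠ 0 := hDx
    have h2 : (1 - e * c) ≠ 0 := (hden x).ne'
    have h3 : (1 + s) ≠ 0 := by positivity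
    have hN : e * c * (1 + s - e * c) - e * Real.sin x * (e * Real.sin x)
        = s * (1 + s) - (1 + s) * (1 - e * c) := by
      linear_combination (-e ^ 2) * hsin - hs2
    rw [hN]
    field_simp
    ring
  have hcont : Continuous fun x : ℝ => 1 / (1 - e * Real.cos x) := by
    apply Continuous.div continuous_const (by continuity)
    intro x; exact (hden x).ne'
  rw [intervalIntegral.integral_eq_sub_of_hasDerivAt (fun x _ => hderiv x)
    (hcont.intervalIntegrable _ _)]
  simp only [hF]
  rw [Real.sin_zero, Real.cos_zero, Real.sin_two_pi, Real.cos_two_pi]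
  field_simp
  simp

/-- Let `a > 0`, `β > 0` and `0 ≤ e < 1`. The average over the mean anomaly of
`v²/r = β(2/r − 1/a)/r` along a Kepler ellipse of semi-major axis `a` and eccentricity `e`
equals `(β/a²)(2/√(1 − e²) − 1)`:
`(1/(2π)) ∫₀^{2π} β(2/(a(1 − e·cos E)) − 1/a)·(1/(a(1 − e·cos E)))·(1 − e·cos E) dE
  = (β/a²)(2/√(1 − e²) − 1)`. -/
theorem kepler_mean_anomaly_average_v_sq_over_r (a β e : ℝ) (ha : 0 < a) (hβ : 0 < β)
    (he0 : 0 ≤ e) (he1 : e < 1) :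
    (1 / (2 * π)) * ∫ E in (0:ℝ)..(2 * π),
        β * (2 / (a * (1 - e * Real.cos E)) - 1 / a) * (1 / (a * (1 - e * Real.cos E)))
          * (1 - e * Real.cos E) =
      (β / a ^ 2) * (2 / Real.sqrt (1 - e ^ 2) - 1) := by
  have hden : ∀ x : ℝ, 0 < 1 - e * Real.cos x := by
    intro x
    nlinarith [Real.cos_le_one x, Real.neg_one_le_cos x]
  have he2 : (0:ℝ) < 1 - e ^ 2 := by nlinarith
  have hs0 : 0 < Real.sqrt (1 - e ^ 2) := Real.sqrt_pos.mpr he2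
  have hfun : (fun E : ℝ => β * (2 / (a * (1 - e * Real.cos E)) - 1 / a)
        * (1 / (a * (1 - e * Real.cos E))) * (1 - e * Real.cos E))
      = fun E : ℝ => (2 * β / a ^ 2) * (1 / (1 - e * Real.cos E)) - β / a ^ 2 := by
    funext E
    have h1 : (1 - e * Real.cos E) ≠ 0 := (hden E).ne'
    field_simp
  have hc : Continuous fun E : ℝ => 2 * β / a ^ 2 * (1 / (1 - e * Real.cos E)) :=
    continuous_const.mul (continuous_const.div (by continuity) fun x => (hden x).ne')
  rw [hfun, intervalIntegral.integral_sub (hc.intervalIntegrable _ _)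
    (intervalIntegrable_const),
    intervalIntegral.integral_const_mul, kepler_core_integral e he0 he1,
    intervalIntegral.integral_const]
  have hπ : (π : ℝ) ≠ 0 := Real.pi_ne_zero
  have ha' : a ≠ 0 := ha.ne'
  field_simp
  have h4 : a ^ 2 * a⁻¹ ^ 2 = 1 := by field_simp
  linear_combination (-(π * β * Real.sqrt (1 - e ^ 2) * 2)) * h4
end

section
/- Let a > 0, β > 0 and 0 < e < 1. The average over the mean anomaly of the quantity ṙ²/r along a Kepler ellipse of semi-major axis a and eccentricity e, where the squared radial velocity is ṙ² = β e² sin²E/(a(1 − e·cos E)²), equals (β/a²)(1/√(1 − e²) − 1); explicitly, (1/(2π)) ∫₀^{2π} (β e² sin²E/(a(1 − e·cos E)²))·(1/(a(1 − e·cos E)))·(1 − e·cos E) dE = (β/a²)(1/√(1 − e²) − 1). -/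
open Real

set_option maxHeartbeats 1000000 in
private lemma kepler_alg (a β e s c si : ℝ) (hsin : si^2 = 1 - c^2) (hs2 : s^2 = 1 - e^2)
    (hs0 : 0 < s) (ha : a ≠ 0) (d1 : 1 - e*c ≠ 0) (d2 : 1 + s - e*c ≠ 0) :
    β*e^2*si^2/(a*(1-e*c)^2) * (1/(a*(1-e*c))) * (1-e*c)
    = (-1 + (1 + 2*((1/(1+(e*si/(1+s-e*c))^2)) * ((e*c*(1+s-e*c) - e*si*(e*si))/(1+s-e*c)^2)))/s
        - (e*c*(1-e*c) - e*si*(e*si))/(1-e*c)^2) * (β/a^2) := by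
  have h1s : (1:ℝ) + s ≠ 0 := by positivity
  have key : 1 + (e*si/(1+s-e*c))^2 = 2*(1+s)*(1-e*c)/(1+s-e*c)^2 := by
    field_simp
    linear_combination (e^2) * hsin + hs2
  rw [key]
  have h2 : 2*(1+s)*(1-e*c)/(1+s-e*c)^2 ≠ 0 := by
    apply div_ne_zero
    · intro h
      rcases mul_eq_zero.mp h with h' | h'
      · exact h1s (by linarith [mul_eq_zero.mp h'])
      · exact d1 h'
    · exact pow_ne_zero 2 d2
  field_simp
  linear_combination (β*(1-e*c)*e^2) * hsin + (β*(1-e*c)) * hs2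

/-- Let `a > 0`, `β > 0` and `0 < e < 1`. The average over the mean anomaly of `ṙ²/r` along a
Kepler ellipse of semi-major axis `a` and eccentricity `e`, where
`ṙ² = β e² sin²E/(a(1 − e·cos E)²)`, equals `(β/a²)(1/√(1 − e²) − 1)`:
`(1/(2π)) ∫₀^{2π} (β e² sin²E/(a(1 − e·cos E)²))·(1/(a(1 − e·cos E)))·(1 − e·cos E) dE
  = (β/a²)(1/√(1 − e²) − 1)`. -/
theorem kepler_mean_anomaly_average_rdot_sq_over_r (a β e : ℝ) (ha : 0 < a) (hβ : 0 < β)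
    (he0 : 0 < e) (he1 : e < 1) :
    (1 / (2 * π)) * ∫ E in (0:ℝ)..(2 * π),
        (β * e ^ 2 * Real.sin E ^ 2 / (a * (1 - e * Real.cos E) ^ 2))
          * (1 / (a * (1 - e * Real.cos E))) * (1 - e * Real.cos E) =
      (β / a ^ 2) * (1 / Real.sqrt (1 - e ^ 2) - 1) := by
  set s := Real.sqrt (1 - e ^ 2) with hs
  have he2 : (0:ℝ) < 1 - e ^ 2 := by nlinarith
  have hs2 : s ^ 2 = 1 - e ^ 2 := Real.sq_sqrt he2.le
  have hs0 : 0 < s := Real.sqrt_pos.mpr he2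
  have hden : ∀ x : ℝ, 0 < 1 - e * Real.cos x := by
    intro x
    nlinarith [Real.cos_le_one x, Real.neg_one_le_cos x]
  have hden' : ∀ x : ℝ, 0 < 1 + s - e * Real.cos x := by
    intro x
    nlinarith [Real.cos_le_one x]
  set F : ℝ → ℝ := fun E => (β / a ^ 2) *
    (-E + (E + 2 * Real.arctan (e * Real.sin E / (1 + s - e * Real.cos E))) / s
      - e * Real.sin E / (1 - e * Real.cos E)) with hF
  have hderiv : ∀ x : ℝ, HasDerivAt F
      ((β * e ^ 2 * Real.sin x ^ 2 / (a * (1 - e * Real.cos x) ^ 2))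
        * (1 / (a * (1 - e * Real.cos x))) * (1 - e * Real.cos x)) x := by
    intro x
    have h1 : HasDerivAt (fun y : ℝ => e * Real.sin y) (e * Real.cos x) x :=
      (Real.hasDerivAt_sin x).const_mul e
    have h2 : HasDerivAt (fun y : ℝ => 1 + s - e * Real.cos y) (e * Real.sin x) x := by
      have := ((Real.hasDerivAt_cos x).const_mul e).const_sub (1 + s)
      simpa using this
    have h3 : HasDerivAt (fun y : ℝ => 1 - e * Real.cos y) (e * Real.sin x) x := by
      have := ((Real.hasDerivAt_cos x).const_mul e).const_sub 1
      simpa using this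
    have hu : HasDerivAt (fun y : ℝ => e * Real.sin y / (1 + s - e * Real.cos y))
        ((e * Real.cos x * (1 + s - e * Real.cos x) - e * Real.sin x * (e * Real.sin x))
          / (1 + s - e * Real.cos x) ^ 2) x :=
      h1.div h2 (hden' x).ne'
    have hat : HasDerivAt (fun y : ℝ => Real.arctan (e * Real.sin y / (1 + s - e * Real.cos y)))
        ((1 / (1 + (e * Real.sin x / (1 + s - e * Real.cos x)) ^ 2)) *
          ((e * Real.cos x * (1 + s - e * Real.cos x) - e * Real.sin x * (e * Real.sin x))
            / (1 + s - e * Real.cos x) ^ 2)) x :=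
      (Real.hasDerivAt_arctan _).comp x hu
    have hq : HasDerivAt (fun y : ℝ => e * Real.sin y / (1 - e * Real.cos y))
        ((e * Real.cos x * (1 - e * Real.cos x) - e * Real.sin x * (e * Real.sin x))
          / (1 - e * Real.cos x) ^ 2) x :=
      h1.div h3 (hden x).ne'
    have hid : HasDerivAt (fun y : ℝ => y) 1 x := hasDerivAt_id x
    have hmain := (((hid.neg.add (((hid.add (hat.const_mul 2)).div_const s))).sub hq).const_mul
      (β / a ^ 2))
    have hsin : Real.sin x ^ 2 = 1 - Real.cos x ^ 2 := by
      nlinarith [Real.sin_sq_add_cos_sq x]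
    have halg := kepler_alg a β e s (Real.cos x) (Real.sin x) hsin hs2 hs0 ha.ne'
      (hden x).ne' (hden' x).ne'
    convert hmain using 1
    case e'_4 => rfl
    case e'_5 => rfl
    case e'_8 => rfl
    rw [halg]
    ring
  have hint : IntervalIntegrable
      (fun E => (β * e ^ 2 * Real.sin E ^ 2 / (a * (1 - e * Real.cos E) ^ 2))
        * (1 / (a * (1 - e * Real.cos E))) * (1 - e * Real.cos E)) MeasureTheory.volume 0 (2*π) := by
    apply Continuous.intervalIntegrable
    apply Continuous.mul
    apply Continuous.mul
    · exact Continuous.div (by continuity) (by continuity)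
        (fun x => by have := hden x; positivity)
    · exact Continuous.div continuous_const (by continuity) (fun x => by have := hden x; positivity)
    · exact continuous_const.sub (continuous_const.mul Real.continuous_cos)
  have hFTC := intervalIntegral.integral_eq_sub_of_hasDerivAt
    (fun x _ => hderiv x) hint
  rw [hFTC]
  have hπ : (0:ℝ) < π := Real.pi_pos
  simp only [hF, Real.sin_zero, Real.cos_zero, Real.sin_two_pi, Real.cos_two_pi,
    mul_zero, zero_mul, zero_div, Real.arctan_zero]
  field_simp
  ring
end

section
/- Let a > 0, β > 0, μ > 0, c > 0, 0 < e < 1 and υ real, and set γ₁ = (1 − 3υ)/8, γ₂ = β(3 + υ)/2, γ₃ = βυ/2, γ₄ = β²/2. Then the mean-anomaly average of the relativistic two-body correction Hamiltonian, namely (1/(2πc²)) ∫₀^{2π} [ −γ₁ μ (β(2/r − 1/a))² − γ₂ μ β(2/r − 1/a)/r − γ₃ μ (β e² sin²E/(a(1 − e·cos E)²))/r + γ₄ μ/r² ] (1 − e·cos E) dE with r = a(1 − e·cos E), equals (μβ²/(a²c²)) · [ (15 − υ)/8 − 3/√(1 − e²) ]. -/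
open Real

lemma hasDerivAt_nu (e s b x : ℝ) (he0 : 0 < e) (he1 : e < 1)
    (hs : s = Real.sqrt (1 - e ^ 2)) (hb : b = e / (1 + s)) :
    HasDerivAt (fun y => (y + 2 * Real.arctan (b * Real.sin y / (1 - b * Real.cos y))) / s)
      (1 / (1 - e * Real.cos x)) x := by
  have he2 : (0:ℝ) < 1 - e ^ 2 := by nlinarith
  have hs0 : 0 < s := by rw [hs]; positivity
  have hs2 : s ^ 2 = 1 - e ^ 2 := by rw [hs, sq_sqrt he2.le]
  have hb0 : 0 < b := by rw [hb]; positivity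
  have hb1 : b < 1 := by
    rw [hb, div_lt_one (by positivity)]; linarith
  have hbd : 0 < 1 - b * Real.cos x := by
    nlinarith [Real.neg_one_le_cos x, Real.cos_le_one x]
  have hed : 0 < 1 - e * Real.cos x := by
    nlinarith [Real.neg_one_le_cos x, Real.cos_le_one x]
  have hbe : b * (1 + s) = e := by rw [hb]; field_simp
  have hbs : b ^ 2 * (1 + s) = 1 - s := by
    have h1s : (0:ℝ) < 1 + s := by linarith
    have h2 : b ^ 2 * (1 + s) * (1 + s) = (1 - s) * (1 + s) := by
      linear_combination (b * (1 + s) + e) * hbe + hs2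
    exact mul_right_cancel₀ h1s.ne' h2
  have h1 : HasDerivAt (fun y => b * Real.sin y) (b * Real.cos x) x :=
    (Real.hasDerivAt_sin x).const_mul b
  have h2 : HasDerivAt (fun y => 1 - b * Real.cos y) (b * Real.sin x) x := by
    simpa using ((Real.hasDerivAt_cos x).const_mul b).const_sub 1
  have hq := h1.div h2 hbd.ne'
  have ha := hq.arctan
  have htot := ((hasDerivAt_id x).add (ha.const_mul 2)).div_const s
  convert htot using 1
  · rfl
  · rfl
  · rfl
  rw [eq_comm]
  simp only [Pi.div_apply]
  have e1 : 1 + (b * Real.sin x / (1 - b * Real.cos x)) ^ 2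
      = (1 + b ^ 2 - 2 * b * Real.cos x) / (1 - b * Real.cos x) ^ 2 := by
    field_simp
    linear_combination b ^ 2 * Real.sin_sq_add_cos_sq x
  have e2 : b * Real.cos x * (1 - b * Real.cos x) - b * Real.sin x * (b * Real.sin x)
      = b * Real.cos x - b ^ 2 := by
    linear_combination (-(b ^ 2)) * Real.sin_sq_add_cos_sq x
  have hD : (0:ℝ) < 1 + b ^ 2 - 2 * b * Real.cos x := by
    nlinarith [Real.neg_one_le_cos x, Real.cos_le_one x]
  have key : (1 - b ^ 2) * (1 - e * Real.cos x) = s * (1 + b ^ 2 - 2 * b * Real.cos x) := by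
    rw [← hbe]; linear_combination (b * Real.cos x - 1) * hbs
  rw [e1, e2]
  field_simp
  rw [eq_div_iff (by rw [mul_comm]; exact hed.ne')]
  linear_combination key


set_option maxHeartbeats 1000000 in
/-- Let `a > 0`, `β > 0`, `μ > 0`, `c > 0`, `0 < e < 1` and `υ` real, and set
`γ₁ = (1 − 3υ)/8`, `γ₂ = β(3 + υ)/2`, `γ₃ = βυ/2`, `γ₄ = β²/2`. Then the mean-anomaly
average of the relativistic two-body correction Hamiltonian equals
`(μβ²/(a²c²)) · [ (15 − υ)/8 − 3/√(1 − e²) ]`. -/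
theorem relativistic_secular_hamiltonian_average (a β μ c e υ : ℝ)
    (ha : 0 < a) (hβ : 0 < β) (hμ : 0 < μ) (hc : 0 < c) (he0 : 0 < e) (he1 : e < 1)
    (γ₁ γ₂ γ₃ γ₄ : ℝ)
    (hγ₁ : γ₁ = (1 - 3 * υ) / 8) (hγ₂ : γ₂ = β * (3 + υ) / 2)
    (hγ₃ : γ₃ = β * υ / 2) (hγ₄ : γ₄ = β ^ 2 / 2) :
    (1 / (2 * π * c ^ 2)) * ∫ E in (0:ℝ)..(2 * π),
        (-γ₁ * μ * (β * (2 / (a * (1 - e * Real.cos E)) - 1 / a)) ^ 2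
          - γ₂ * μ * (β * (2 / (a * (1 - e * Real.cos E)) - 1 / a))
              / (a * (1 - e * Real.cos E))
          - γ₃ * μ * (β * e ^ 2 * Real.sin E ^ 2 / (a * (1 - e * Real.cos E) ^ 2))
              / (a * (1 - e * Real.cos E))
          + γ₄ * μ / (a * (1 - e * Real.cos E)) ^ 2) * (1 - e * Real.cos E) =
      (μ * β ^ 2 / (a ^ 2 * c ^ 2)) * ((15 - υ) / 8 - 3 / Real.sqrt (1 - e ^ 2)) := by
  subst hγ₁ hγ₂ hγ₃ hγ₄
  set s : ℝ := Real.sqrt (1 - e ^ 2) with hsdef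
  set b : ℝ := e / (1 + s) with hbdef
  have he2 : (0:ℝ) < 1 - e ^ 2 := by nlinarith
  have hs0 : 0 < s := by rw [hsdef]; positivity
  have hu : ∀ x : ℝ, 0 < 1 - e * Real.cos x := fun x => by
    nlinarith [Real.neg_one_le_cos x, Real.cos_le_one x]
  set K₁ : ℝ := -3 * β ^ 2 with hK1
  set K₂ : ℝ := β ^ 2 * (15 - υ) / 8 with hK2
  set K₃ : ℝ := (1 - 3 * υ) / 8 * β ^ 2 * e with hK3
  set K₄ : ℝ := β ^ 2 * υ * e / 2 with hK4
  set g : ℝ → ℝ := fun x => (μ / a ^ 2) *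
      (K₁ / (1 - e * Real.cos x) + K₂ + K₃ * Real.cos x
        + K₄ * ((Real.cos x - e) / (1 - e * Real.cos x) ^ 2)) with hg
  have hcongr : Set.EqOn (fun E : ℝ =>
      (-((1 - 3 * υ) / 8) * μ * (β * (2 / (a * (1 - e * Real.cos E)) - 1 / a)) ^ 2
          - β * (3 + υ) / 2 * μ * (β * (2 / (a * (1 - e * Real.cos E)) - 1 / a))
              / (a * (1 - e * Real.cos E))
          - β * υ / 2 * μ * (β * e ^ 2 * Real.sin E ^ 2 / (a * (1 - e * Real.cos E) ^ 2))
              / (a * (1 - e * Real.cos E))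
          + β ^ 2 / 2 * μ / (a * (1 - e * Real.cos E)) ^ 2) * (1 - e * Real.cos E)) g
      (Set.uIcc 0 (2 * π)) := by
    intro x _
    have hux := (hu x).ne'
    simp only [hg]
    rw [Real.sin_sq]
    field_simp
    ring
  rw [intervalIntegral.integral_congr hcongr]
  set G : ℝ → ℝ := fun x => (μ / a ^ 2) *
      (K₁ * ((x + 2 * Real.arctan (b * Real.sin x / (1 - b * Real.cos x))) / s)
        + K₂ * x + K₃ * Real.sin x + K₄ * (Real.sin x / (1 - e * Real.cos x))) with hG
  have hderiv : ∀ x ∈ Set.uIcc (0:ℝ) (2 * π), HasDerivAt G (g x) x := by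
    intro x _
    have hF := hasDerivAt_nu e s b x he0 he1 hsdef hbdef
    have hden : HasDerivAt (fun y => 1 - e * Real.cos y) (e * Real.sin x) x := by
      simpa using ((Real.hasDerivAt_cos x).const_mul e).const_sub 1
    have hq := (Real.hasDerivAt_sin x).div hden (hu x).ne'
    have htot := ((((hF.const_mul K₁).add ((hasDerivAt_id x).const_mul K₂)).add
        ((Real.hasDerivAt_sin x).const_mul K₃)).add (hq.const_mul K₄)).const_mul (μ / a ^ 2)
    convert htot using 1
    · rfl
    · rfl
    · rfl
    have e3 : Real.cos x * (1 - e * Real.cos x) - Real.sin x * (e * Real.sin x)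
        = Real.cos x - e := by
      linear_combination (-e) * Real.sin_sq_add_cos_sq x
    simp only [hg, e3, id_eq]
    ring
  have hcont : Continuous g := by
    have h1 : Continuous fun x : ℝ => 1 - e * Real.cos x := continuous_const.sub (continuous_const.mul Real.continuous_cos)
    have h2 : ∀ x : ℝ, 1 - e * Real.cos x ≠ 0 := fun x => (hu x).ne'
    exact continuous_const.mul
      ((((continuous_const.div h1 h2).add continuous_const).add
          (continuous_const.mul Real.continuous_cos)).add
        (continuous_const.mul ((Real.continuous_cos.sub continuous_const).div (h1.pow 2)
          (fun x => pow_ne_zero 2 (h2 x)))))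
  rw [intervalIntegral.integral_eq_sub_of_hasDerivAt hderiv (hcont.intervalIntegrable 0 (2 * π))]
  have hb1 : b < 1 := by
    rw [hbdef, div_lt_one (by positivity)]; linarith
  simp only [hG, Real.sin_two_pi, Real.cos_two_pi, Real.sin_zero, Real.cos_zero,
    mul_zero, zero_div, Real.arctan_zero, mul_one, zero_add, add_zero, mul_zero]
  have hπ := Real.pi_ne_zero
  field_simp [hK1, hK2]
  ring
end
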